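/- For all real x and n ∈ ℕ, ((n+1)²/4)·U_{n+1}(x)² − ∑_{k=0}^{n} (k+1)·U_k(x)² = (x² − 1)·C^{(2)}_n(x)². -/

import Mathlib

open Polynomial

/-- The Gegenbauer polynomial of index 2, defined by `2 C²ₙ(x) = d/dx U_{n+1}(x)`. -/
noncomputable def gegenbauer2 (n : ℕ) : Polynomial ℝ :=
  Polynomial.C (1 / 2 : ℝ) * Polynomial.derivative (Polynomial.Chebyshev.U ℝ (n + 1))

open Polynomial.Chebyshev in
lemma dette_aux (n : ℕ) :
    ((n : Polynomial ℝ) + 1) ^ 2 * (Polynomial.Chebyshev.U ℝ (n + 1)) ^ 2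
        - 4 * ∑ k ∈ Finset.range (n + 1),
            ((k : Polynomial ℝ) + 1) * (Polynomial.Chebyshev.U ℝ k) ^ 2
      = (X ^ 2 - 1) * (Polynomial.derivative (Polynomial.Chebyshev.U ℝ (n + 1))) ^ 2 := by
  induction n with
  | zero =>
      simp only [Nat.cast_zero, zero_add, Finset.sum_range_one, U_one, U_zero]
      simp only [derivative_mul, derivative_X, derivative_ofNat]
      ring
  | succ n ih =>
      have hc : ((X : Polynomial ℝ) ^ 2 - 1) ≠ 0 := by
        intro h
        have := congrArg (eval 2) h
        norm_num at this
      have h1 := add_one_mul_T_eq_poly_in_U (R := ℝ) ((n : ℤ) + 1)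
      have h2 := add_one_mul_T_eq_poly_in_U (R := ℝ) ((n : ℤ) + 2)
      have e1 : ((X : Polynomial ℝ) ^ 2 - 1) * derivative (U ℝ ((n : ℤ) + 1))
          = ((n : Polynomial ℝ) + 2) * T ℝ ((n : ℤ) + 2) - X * U ℝ ((n : ℤ) + 1) := by
        have : ((n : ℤ) + 1) + 1 = (n : ℤ) + 2 := by ring
        rw [this] at h1
        push_cast at h1 ⊢
        linear_combination -h1
      have e2 : ((X : Polynomial ℝ) ^ 2 - 1) * derivative (U ℝ ((n : ℤ) + 2))
          = ((n : Polynomial ℝ) + 3) * T ℝ ((n : ℤ) + 3) - X * U ℝ ((n : ℤ) + 2) := by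
        have : ((n : ℤ) + 2) + 1 = (n : ℤ) + 3 := by ring
        rw [this] at h2
        push_cast at h2 ⊢
        linear_combination -h2
      have h3 := T_eq_U_sub_X_mul_U ℝ ((n : ℤ) + 2)
      have h4 := T_eq_U_sub_X_mul_U ℝ ((n : ℤ) + 3)
      have h5 := U_add_two ℝ (n : ℤ)
      have h6 := U_add_two ℝ ((n : ℤ) + 1)
      have hstar :
          (((n : Polynomial ℝ) + 3) * T ℝ ((n : ℤ) + 3) - X * U ℝ ((n : ℤ) + 2)) ^ 2
              - (((n : Polynomial ℝ) + 2) * T ℝ ((n : ℤ) + 2) - X * U ℝ ((n : ℤ) + 1)) ^ 2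
            = ((X : Polynomial ℝ) ^ 2 - 1) *
                (((n : Polynomial ℝ) + 2) ^ 2 * (U ℝ ((n : ℤ) + 2)) ^ 2
                  - ((n : Polynomial ℝ) + 1) ^ 2 * (U ℝ ((n : ℤ) + 1)) ^ 2
                  - 4 * ((n : Polynomial ℝ) + 2) * (U ℝ ((n : ℤ) + 1)) ^ 2) := by
        have h3' : T ℝ ((n : ℤ) + 2) = U ℝ ((n : ℤ) + 2) - X * U ℝ ((n : ℤ) + 1) := by
          have : ((n : ℤ) + 2) - 1 = (n : ℤ) + 1 := by ring
          rw [h3, this]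
        have h4' : T ℝ ((n : ℤ) + 3) = U ℝ ((n : ℤ) + 3) - X * U ℝ ((n : ℤ) + 2) := by
          have : ((n : ℤ) + 3) - 1 = (n : ℤ) + 2 := by ring
          rw [h4, this]
        have h6' : U ℝ ((n : ℤ) + 3) = 2 * X * U ℝ ((n : ℤ) + 2) - U ℝ ((n : ℤ) + 1) := by
          have : ((n : ℤ) + 1) + 2 = (n : ℤ) + 3 := by ring
          rw [← this]; have : ((n : ℤ) + 1) + 1 = (n : ℤ) + 2 := by ring
          rw [h6, this]
        rw [h4', h6', h3', h5]
        ring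
      have key : ((X : Polynomial ℝ) ^ 2 - 1) *
          (((X : Polynomial ℝ) ^ 2 - 1) *
            ((derivative (U ℝ ((n : ℤ) + 2))) ^ 2 - (derivative (U ℝ ((n : ℤ) + 1))) ^ 2))
          = ((X : Polynomial ℝ) ^ 2 - 1) *
              (((n : Polynomial ℝ) + 2) ^ 2 * (U ℝ ((n : ℤ) + 2)) ^ 2
                - ((n : Polynomial ℝ) + 1) ^ 2 * (U ℝ ((n : ℤ) + 1)) ^ 2
                - 4 * ((n : Polynomial ℝ) + 2) * (U ℝ ((n : ℤ) + 1)) ^ 2) := by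
        calc ((X : Polynomial ℝ) ^ 2 - 1) *
            (((X : Polynomial ℝ) ^ 2 - 1) *
              ((derivative (U ℝ ((n : ℤ) + 2))) ^ 2 - (derivative (U ℝ ((n : ℤ) + 1))) ^ 2))
            = (((X : Polynomial ℝ) ^ 2 - 1) * derivative (U ℝ ((n : ℤ) + 2))) ^ 2
              - (((X : Polynomial ℝ) ^ 2 - 1) * derivative (U ℝ ((n : ℤ) + 1))) ^ 2 := by ring
          _ = _ := by rw [e1, e2, hstar]
      have hstep := mul_left_cancel₀ hc key
      rw [Finset.sum_range_succ]
      push_cast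
      have hi2 : ((n : ℤ) + 1 + 1) = (n : ℤ) + 2 := by ring
      rw [hi2]
      linear_combination ih - hstep

theorem dette_identity (n : ℕ) (x : ℝ) :
    (((n : ℝ) + 1) ^ 2 / 4) * ((Polynomial.Chebyshev.U ℝ (n + 1)).eval x) ^ 2
        - ∑ k ∈ Finset.range (n + 1), ((k : ℝ) + 1) * ((Polynomial.Chebyshev.U ℝ k).eval x) ^ 2
      = (x ^ 2 - 1) * ((gegenbauer2 n).eval x) ^ 2 := by
  have h := congrArg (eval x) (dette_aux n)
  simp only [eval_sub, eval_mul, eval_pow, eval_add, eval_natCast, eval_ofNat, eval_X,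
    eval_one, eval_finset_sum, gegenbauer2, eval_C] at h ⊢
  linear_combination h / 4
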